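/- Let (λ_k)_{k∈ℕ} be a sequence of reals with 0 < λ_k < 1 for all k, Σ_k λ_k = 1, and finite entropy Σ_k λ_k (−log λ_k) < ∞. Then there exists a monotone nondecreasing sequence of positive reals (μ_k) with μ_k → +∞ such that Σ_k μ_k λ_k (−log λ_k) < ∞ and, for every β > 0, the series Σ_k λ_k^{β μ_k} converges (equivalently Σ_k exp(−β μ_k (−log λ_k)) < ∞). -/

import Mathlib

open Real

/-- Shirokov's trick: for any probability distribution `(λ k)` with finite entropy
there is a nondecreasing sequence `μ k → +∞` such that `∑ μ k • λ k (−log λ k) < ∞`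
and `∑ exp(−β μ k (−log λ k)) < ∞` for all `β > 0`. -/
theorem exists_gibbs_hamiltonian_for_finite_entropy
    (lam : ℕ → ℝ) (hlam : ∀ k, 0 < lam k ∧ lam k < 1)
    (hsum : HasSum lam 1)
    (hent : Summable (fun k => lam k * (-Real.log (lam k)))) :
    ∃ μ : ℕ → ℝ, Monotone μ ∧ (∀ k, 0 < μ k) ∧
      Filter.Tendsto μ Filter.atTop Filter.atTop ∧
      Summable (fun k => μ k * (lam k * (-Real.log (lam k)))) ∧
      ∀ β : ℝ, 0 < β →
        Summable (fun k => Real.exp (-β * (μ k * (-Real.log (lam k))))) := by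
  set a : ℕ → ℝ := fun k => lam k * (-Real.log (lam k)) with ha
  have hapos : ∀ k, 0 < a k := by
    intro k
    have h1 := (hlam k).1
    have h2 := (hlam k).2
    have : Real.log (lam k) < 0 := Real.log_neg h1 h2
    exact mul_pos h1 (by linarith)
  set E : ℕ → ℝ := fun k => ∑' n, a (n + k) with hE
  have hsummE : ∀ k, Summable (fun n => a (n + k)) := fun k =>
    (summable_nat_add_iff k).2 hent
  have hEpos : ∀ k, 0 < E k := by
    intro k
    exact Summable.tsum_pos (hsummE k) (fun i => (hapos _).le) 0 (hapos _)
  have hErec : ∀ k, E k = a k + E (k + 1) := by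
    intro k
    have := Summable.tsum_eq_zero_add (hsummE k)
    simpa [hE, Nat.add_assoc, Nat.add_comm 1 k] using this
  have hEanti : Antitone E := by
    apply antitone_nat_of_succ_le
    intro k
    have := hErec k
    have := hapos k
    linarith
  have hEzero : Filter.Tendsto E Filter.atTop (nhds 0) := tendsto_sum_nat_add a
  set μ : ℕ → ℝ := fun k => (Real.sqrt (E k))⁻¹ with hμ
  have hsqrtpos : ∀ k, 0 < Real.sqrt (E k) := fun k => Real.sqrt_pos.2 (hEpos k)
  have hμpos : ∀ k, 0 < μ k := fun k => inv_pos.2 (hsqrtpos k)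
  have hμmono : Monotone μ := by
    intro j k hjk
    have h1 : Real.sqrt (E k) ≤ Real.sqrt (E j) := Real.sqrt_le_sqrt (hEanti hjk)
    exact inv_anti₀ (hsqrtpos k) h1
  have hμtop : Filter.Tendsto μ Filter.atTop Filter.atTop := by
    apply Filter.Tendsto.inv_tendsto_nhdsGT_zero
    apply tendsto_nhdsWithin_of_tendsto_nhds_of_eventually_within
    · have : Filter.Tendsto (fun k => Real.sqrt (E k)) Filter.atTop (nhds (Real.sqrt 0)) :=
        (Real.continuous_sqrt.continuousAt).tendsto.comp hEzero
      simpa using this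
    · exact Filter.Eventually.of_forall fun k => hsqrtpos k
  have key : ∀ k, μ k * a k ≤ 2 * (Real.sqrt (E k) - Real.sqrt (E (k + 1))) := by
    intro k
    set s := Real.sqrt (E k) with hs
    set t := Real.sqrt (E (k + 1)) with ht
    have hs2 : s ^ 2 = E k := Real.sq_sqrt (hEpos k).le
    have ht2 : t ^ 2 = E (k + 1) := Real.sq_sqrt (hEpos (k + 1)).le
    have hts : t ≤ s := Real.sqrt_le_sqrt (hEanti (Nat.le_succ k))
    have hak : a k = s ^ 2 - t ^ 2 := by rw [hs2, ht2]; have := hErec k; linarith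
    have hspos : 0 < s := hsqrtpos k
    rw [hak]
    rw [hμ]
    rw [inv_mul_le_iff₀ hspos]
    nlinarith [sq_nonneg (s - t)]
  have hsum_mid : Summable (fun k => μ k * a k) := by
    apply Summable.of_nonneg_of_le (fun k => (mul_pos (hμpos k) (hapos k)).le) key
    apply summable_of_sum_range_le (c := 2 * Real.sqrt (E 0))
    · intro k
      have hts : Real.sqrt (E (k + 1)) ≤ Real.sqrt (E k) :=
        Real.sqrt_le_sqrt (hEanti (Nat.le_succ k))
      linarith
    · intro n
      have : ∑ i ∈ Finset.range n, (2 * (Real.sqrt (E i) - Real.sqrt (E (i + 1))))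
          = 2 * (Real.sqrt (E 0) - Real.sqrt (E n)) := by
        rw [← Finset.mul_sum, Finset.sum_range_sub' (fun i => Real.sqrt (E i)) n]
      rw [this]
      have := Real.sqrt_nonneg (E n)
      linarith
  refine ⟨μ, hμmono, hμpos, hμtop, hsum_mid, ?_⟩
  intro β hβ
  apply Summable.of_norm_bounded_eventually hsum.summable
  rw [Nat.cofinite_eq_atTop]
  have h1 : ∀ᶠ k in Filter.atTop, (1 : ℝ) ≤ β * μ k := by
    have := (hμtop.const_mul_atTop hβ).eventually_ge_atTop 1
    simpa using this
  filter_upwards [h1] with k hk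
  have hl1 := (hlam k).1
  have hl2 := (hlam k).2
  have heq : Real.exp (-β * (μ k * (-Real.log (lam k)))) = lam k ^ (β * μ k) := by
    rw [Real.rpow_def_of_pos hl1]
    ring_nf
  rw [Real.norm_eq_abs, heq, abs_of_nonneg (Real.rpow_nonneg hl1.le _)]
  calc lam k ^ (β * μ k) ≤ lam k ^ (1 : ℝ) :=
        Real.rpow_le_rpow_of_exponent_ge hl1 hl2.le hk
    _ = lam k := Real.rpow_one _
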